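/- Let d ≥ 1 and q > d be integers, and let v_1, …, v_q ∈ ℂ^d. Then there exist indices i ≠ j such that |⟨v_i, v_j⟩| ≥ (1/d)·‖v_i‖₂·‖v_j‖₂. -/

import Mathlib

open Finset

/-- Among `q > d` vectors in `ℂ^d` there are two distinct ones whose inner
product is at least `1/d` times the product of their norms. -/
theorem exists_large_inner_product (d q : ℕ) (hd : 1 ≤ d) (hq : d < q)
    (v : Fin q → EuclideanSpace ℂ (Fin d)) :
    ∃ i j : Fin q, i ≠ j ∧
      (1 / (d : ℝ)) * ‖v i‖ * ‖v j‖ ≤ ‖(inner ℂ (v i) (v j) : ℂ)‖ := by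
  by_contra hcon
  push_neg at hcon
  have hdpos : (0 : ℝ) < d := by exact_mod_cast hd
  -- all vectors are nonzero
  have hvne : ∀ i, v i ≠ 0 := by
    intro i hvi
    have hcard : 1 < Fintype.card (Fin q) := by simp; omega
    obtain ⟨j, hj⟩ := Fintype.exists_ne_of_one_lt_card hcard i
    have := hcon i j (Ne.symm hj)
    rw [hvi] at this
    simp at this
  -- embed Fin (d+1) into Fin q
  set e : Fin (d+1) → Fin q := fun k => Fin.castLE (by omega) k with he
  have hei : Function.Injective e := fun a b h => by
    simpa [he, Fin.ext_iff] using h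
  -- normalized vectors
  set u : Fin (d+1) → EuclideanSpace ℂ (Fin d) :=
    fun k => ((‖v (e k)‖ : ℂ))⁻¹ • v (e k) with hu
  have hnorm : ∀ k, ‖u k‖ = 1 := by
    intro k
    have h0 : ‖v (e k)‖ ≠ 0 := norm_ne_zero_iff.mpr (hvne (e k))
    rw [hu]
    simp only [norm_smul, norm_inv, Complex.norm_real, Real.norm_eq_abs,
      abs_norm]
    field_simp
  have hself : ∀ k, (inner ℂ (u k) (u k) : ℂ) = 1 := by
    intro k
    have := inner_self_eq_norm_sq_to_K (𝕜 := ℂ) (u k)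
    rw [this, hnorm k]
    norm_num
  have hsmall : ∀ k l : Fin (d+1), k ≠ l → ‖(inner ℂ (u k) (u l) : ℂ)‖ < 1 / d := by
    intro k l hkl
    have h0k : (0:ℝ) < ‖v (e k)‖ := norm_pos_iff.mpr (hvne (e k))
    have h0l : (0:ℝ) < ‖v (e l)‖ := norm_pos_iff.mpr (hvne (e l))
    have hne : e k ≠ e l := fun h => hkl (hei h)
    have hbd := hcon (e k) (e l) hne
    rw [hu]
    simp only [inner_smul_left, inner_smul_right, norm_mul, norm_inv, map_inv₀,
      RCLike.norm_conj, Complex.norm_real, Real.norm_eq_abs, abs_norm]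
    rw [show ‖v (e l)‖⁻¹ * (‖v (e k)‖⁻¹ * ‖(inner ℂ (v (e k)) (v (e l)) : ℂ)‖)
        = ‖(inner ℂ (v (e k)) (v (e l)) : ℂ)‖ / (‖v (e k)‖ * ‖v (e l)‖) by ring]
    rw [div_lt_iff₀ (by positivity)]
    calc ‖(inner ℂ (v (e k)) (v (e l)) : ℂ)‖
        < 1 / d * ‖v (e k)‖ * ‖v (e l)‖ := hbd
      _ = 1 / d * (‖v (e k)‖ * ‖v (e l)‖) := by ring
  -- linear independence
  have hli : LinearIndependent ℂ u := by
    rw [Fintype.linearIndependent_iff]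
    intro g hg
    by_contra hgne
    push_neg at hgne
    obtain ⟨i0, hi0⟩ := hgne
    obtain ⟨m, -, hm⟩ := Finset.exists_max_image (univ : Finset (Fin (d+1)))
      (fun i => ‖g i‖) ⟨i0, mem_univ i0⟩
    have hgm : g m ≠ 0 := by
      intro h
      have := hm i0 (mem_univ i0)
      simp [h] at this
      exact hi0 this
    have hgmpos : (0:ℝ) < ‖g m‖ := norm_pos_iff.mpr hgm
    -- inner with u m
    have hkey : (inner ℂ (u m) (∑ i, g i • u i) : ℂ) = 0 := by rw [hg, inner_zero_right]
    rw [inner_sum] at hkey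
    simp only [inner_smul_right] at hkey
    rw [← Finset.add_sum_erase univ _ (mem_univ m), hself m, mul_one] at hkey
    have heq : g m = -∑ i ∈ univ.erase m, g i * (inner ℂ (u m) (u i) : ℂ) := by
      linear_combination hkey
    have hle : ‖g m‖ ≤ ∑ i ∈ univ.erase m, ‖g i‖ * ‖(inner ℂ (u m) (u i) : ℂ)‖ := by
      rw [heq, norm_neg]
      refine (norm_sum_le _ _).trans ?_
      apply le_of_eq
      exact Finset.sum_congr rfl fun i _ => norm_mul _ _
    have hlt : ∑ i ∈ univ.erase m, ‖g i‖ * ‖(inner ℂ (u m) (u i) : ℂ)‖ < ‖g m‖ := by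
      have hcard : (univ.erase m).card = d := by
        rw [Finset.card_erase_of_mem (mem_univ m), Finset.card_univ]
        simp
      have hne : (univ.erase m).Nonempty := by
        rw [← Finset.card_pos, hcard]; omega
      calc ∑ i ∈ univ.erase m, ‖g i‖ * ‖(inner ℂ (u m) (u i) : ℂ)‖
          < ∑ _i ∈ univ.erase m, ‖g m‖ * (1/d) := by
            apply Finset.sum_lt_sum_of_nonempty hne
            intro i hi
            have hi' : m ≠ i := (Finset.ne_of_mem_erase hi).symm
            have h1 : ‖g i‖ * ‖(inner ℂ (u m) (u i) : ℂ)‖ ≤ ‖g m‖ * ‖(inner ℂ (u m) (u i) : ℂ)‖ :=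
              mul_le_mul_of_nonneg_right (hm i (mem_univ i)) (norm_nonneg _)
            have h2 : ‖g m‖ * ‖(inner ℂ (u m) (u i) : ℂ)‖ < ‖g m‖ * (1/d) :=
              mul_lt_mul_of_pos_left (hsmall m i hi') hgmpos
            exact lt_of_le_of_lt h1 h2
        _ = d * (‖g m‖ * (1/d)) := by rw [Finset.sum_const, hcard]; simp [nsmul_eq_mul]
        _ = ‖g m‖ := by field_simp
    exact absurd (hle.trans_lt hlt) (lt_irrefl _)
  -- contradiction with dimension
  have hcard := hli.fintype_card_le_finrank
  rw [finrank_euclideanSpace_fin] at hcard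
  simp at hcard
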